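/- Any generic length vector is equivalent to a strongly generic one: if ℓ ∈ ℝ^r is generic, then there exists a strongly generic ℓ' ∈ ℝ^r such that a subset J ⊆ {1,...,r} is ℓ-long if and only if it is ℓ'-long. -/
import Mathlib


open Finset

/-- `J` is `ℓ`-long if the sum of `ℓ` over `J` exceeds the sum over its complement. -/
def IsLong {r : ℕ} (ℓ : Fin r → ℝ) (J : Finset (Fin r)) : Prop :=
  ∑ j ∈ Jᶜ, ℓ j < ∑ j ∈ J, ℓ j

/-- `ℓ` is generic if no subset sum equals the complementary sum. -/
def IsGeneric {r : ℕ} (ℓ : Fin r → ℝ) : Prop :=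
  ∀ J : Finset (Fin r), ∑ j ∈ J, ℓ j ≠ ∑ j ∈ Jᶜ, ℓ j

open scoped Classical in
/-- `σ_ℓ(J)`: the number of `j ∈ J` such that `J \ {j}` is `ℓ`-short. -/
noncomputable def sigmaL {r : ℕ} (ℓ : Fin r → ℝ) (J : Finset (Fin r)) : ℕ :=
  (J.filter (fun j => ¬ IsLong ℓ (J.erase j))).card

/-- `μ(ℓ) = min { σ_ℓ(J) : J ℓ-long, σ_ℓ(J) > 0 }`. -/
noncomputable def muL {r : ℕ} (ℓ : Fin r → ℝ) : ℕ :=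
  sInf {n : ℕ | 0 < n ∧ ∃ J : Finset (Fin r), IsLong ℓ J ∧ sigmaL ℓ J = n}

/-- `ℓ` is strongly generic if distinct subsets have distinct sums. -/
def IsStronglyGeneric {r : ℕ} (ℓ : Fin r → ℝ) : Prop :=
  ∀ σ τ : Finset (Fin r), σ ≠ τ → ∑ j ∈ σ, ℓ j ≠ ∑ j ∈ τ, ℓ j

/-- The "binary weight" of a finset of `Fin r`, as a real number. -/
noncomputable def binWt {r : ℕ} (J : Finset (Fin r)) : ℝ :=
  ∑ j ∈ J, (2 : ℝ) ^ (j : ℕ)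

lemma binWt_injective {r : ℕ} : Function.Injective (binWt (r := r)) := by
  intro σ τ h
  have hσ : binWt σ = ((∑ i ∈ σ.map Fin.valEmbedding, 2 ^ i : ℕ) : ℝ) := by
    rw [Finset.sum_map]
    push_cast [binWt]
    rfl
  have hτ : binWt τ = ((∑ i ∈ τ.map Fin.valEmbedding, 2 ^ i : ℕ) : ℝ) := by
    rw [Finset.sum_map]
    push_cast [binWt]
    rfl
  rw [hσ, hτ] at h
  have h2 := Nat.cast_injective (R := ℝ) h
  have h3 := Finset.geomSum_injective (le_refl 2) h2
  exact Finset.map_injective Fin.valEmbedding h3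

theorem exists_stronglyGeneric_equivalent {r : ℕ} (ℓ : Fin r → ℝ)
    (hg : IsGeneric ℓ) :
    ∃ ℓ' : Fin r → ℝ, IsStronglyGeneric ℓ' ∧
      ∀ J : Finset (Fin r), IsLong ℓ J ↔ IsLong ℓ' J := by
  classical
  set S : Finset (Fin r) → ℝ := fun J => ∑ j ∈ J, ℓ j with hS
  set g : Finset (Fin r) × Finset (Fin r) → ℝ := fun p =>
    if S p.1 = S p.2 then 1 else |S p.1 - S p.2| / (|binWt p.1 - binWt p.2| + 1) with hgdef
  have hne : (Finset.univ : Finset (Finset (Fin r) × Finset (Fin r))).Nonempty :=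
    ⟨(∅, ∅), Finset.mem_univ _⟩
  set ε : ℝ := Finset.univ.inf' hne g with hε
  have hεpos : 0 < ε := by
    rw [hε, Finset.lt_inf'_iff]
    intro p _
    rw [hgdef]
    dsimp only
    split_ifs with h
    · norm_num
    · apply div_pos
      · exact abs_pos.mpr (sub_ne_zero.mpr h)
      · positivity
  have key : ∀ σ τ : Finset (Fin r), S σ ≠ S τ →
      ε * |binWt σ - binWt τ| < |S σ - S τ| := by
    intro σ τ h
    have hle : ε ≤ g (σ, τ) := Finset.inf'_le _ (Finset.mem_univ _)
    rw [hgdef] at hle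
    simp only [if_neg h] at hle
    set d : ℝ := |binWt σ - binWt τ| with hd
    set A : ℝ := |S σ - S τ| with hA
    have hApos : 0 < A := abs_pos.mpr (sub_ne_zero.mpr h)
    have hdnn : 0 ≤ d := abs_nonneg _
    have h1 : ε * d ≤ A / (d + 1) * d :=
      mul_le_mul_of_nonneg_right hle hdnn
    have h2 : A / (d + 1) * d < A := by
      rw [div_mul_eq_mul_div, div_lt_iff₀ (by linarith)]
      nlinarith
    linarith
  refine ⟨fun j => ℓ j + ε * 2 ^ (j : ℕ), ?_, ?_⟩
  · intro σ τ hστ h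
    have hsum : ∀ ρ : Finset (Fin r),
        ∑ j ∈ ρ, (ℓ j + ε * 2 ^ (j : ℕ)) = S ρ + ε * binWt ρ := by
      intro ρ
      rw [Finset.sum_add_distrib, ← Finset.mul_sum]
      rfl
    rw [hsum, hsum] at h
    by_cases hSeq : S σ = S τ
    · have : ε * binWt σ = ε * binWt τ := by linarith
      have hbw : binWt σ = binWt τ := mul_left_cancel₀ (ne_of_gt hεpos) this
      exact hστ (binWt_injective hbw)
    · have hk := key σ τ hSeq
      have : S σ - S τ = ε * (binWt τ - binWt σ) := by linarith
      have heq : |S σ - S τ| = ε * |binWt σ - binWt τ| := by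
        rw [this, abs_mul, abs_of_pos hεpos, abs_sub_comm]
      linarith
  · intro J
    have hsum : ∀ ρ : Finset (Fin r),
        ∑ j ∈ ρ, (ℓ j + ε * 2 ^ (j : ℕ)) = S ρ + ε * binWt ρ := by
      intro ρ
      rw [Finset.sum_add_distrib, ← Finset.mul_sum]
      rfl
    have hkJ := key J Jᶜ (hg J)
    have habs : |ε * (binWt J - binWt Jᶜ)| < |S J - S Jᶜ| := by
      rw [abs_mul, abs_of_pos hεpos]
      exact hkJ
    constructor
    · intro hL
      have hpos : 0 < S J - S Jᶜ := sub_pos.mpr hL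
      rw [abs_of_pos hpos] at habs
      have := abs_lt.mp habs
      unfold IsLong
      rw [hsum, hsum]
      linarith [this.1]
    · intro hL
      by_contra hc
      have hne' : S J ≠ S Jᶜ := hg J
      have hlt : S J < S Jᶜ := lt_of_le_of_ne (not_lt.mp hc) hne'
      have hneg : S J - S Jᶜ < 0 := by linarith
      rw [abs_of_neg hneg] at habs
      have := abs_lt.mp habs
      unfold IsLong at hL
      rw [hsum, hsum] at hL
      linarith [this.2]
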